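/- Let σ > 0 and ω, c real with 4ω > c². Define ψ : ℝ × ℝ → ℂ by ψ(x,t) = e^{i ω t} φ_{ω,c}(x − c t) e^{i θ_{ω,c}(x − c t)}, where φ_{ω,c} is the solitary profile and θ_{ω,c} the traveling phase. Then ψ is a classical solution of the generalized derivative nonlinear Schrödinger equation: for all (x,t), i ∂_t ψ(x,t) + ∂_x² ψ(x,t) + i |ψ(x,t)|^{2σ} ∂_x ψ(x,t) = 0. -/

import Mathlib

open Real MeasureTheory

/-- The solitary wave profile `φ_{ω,c}` for the generalized DNLS equation. -/
noncomputable def solProfile (σ ω c : ℝ) (y : ℝ) : ℝ :=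
  ((σ + 1) * (4 * ω - c ^ 2) /
      (2 * Real.sqrt ω *
        (Real.cosh (σ * Real.sqrt (4 * ω - c ^ 2) * y) - c / (2 * Real.sqrt ω)))) ^
    (1 / (2 * σ))

/-- The traveling phase `θ_{ω,c}`. -/
noncomputable def travPhase (σ ω c : ℝ) (y : ℝ) : ℝ :=
  c / 2 * y - (1 / (2 * σ + 2)) * ∫ η in Set.Iio y, solProfile σ ω c η ^ (2 * σ)

/-- The solitary wave solution `ψ_{ω,c}(x,t) = e^{iωt} φ_{ω,c}(x-ct) e^{iθ_{ω,c}(x-ct)}`. -/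
noncomputable def solWave (σ ω c : ℝ) (x t : ℝ) : ℂ :=
  Complex.exp (Complex.I * (ω * t : ℝ)) *
    (solProfile σ ω c (x - c * t) : ℂ) *
    Complex.exp (Complex.I * (travPhase σ ω c (x - c * t) : ℂ))

namespace GDNLS

noncomputable def bb (σ ω c : ℝ) : ℝ := σ * Real.sqrt (4 * ω - c ^ 2)

noncomputable def DD (σ ω c y : ℝ) : ℝ :=
  Real.cosh (bb σ ω c * y) - c / (2 * Real.sqrt ω)

noncomputable def FF (σ ω c y : ℝ) : ℝ :=
  (σ + 1) * (4 * ω - c ^ 2) / (2 * Real.sqrt ω * DD σ ω c y)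

noncomputable def FF' (σ ω c y : ℝ) : ℝ :=
  -((σ + 1) * (4 * ω - c ^ 2) * (2 * Real.sqrt ω * (bb σ ω c * Real.sinh (bb σ ω c * y)))) /
    (2 * Real.sqrt ω * DD σ ω c y) ^ 2

noncomputable def GG (σ ω c y : ℝ) : ℝ :=
  -(bb σ ω c * Real.sinh (bb σ ω c * y)) / (2 * σ * DD σ ω c y)

noncomputable def GG' (σ ω c y : ℝ) : ℝ :=
  -(bb σ ω c ^ 2 * (Real.cosh (bb σ ω c * y) * DD σ ω c y - Real.sinh (bb σ ω c * y) ^ 2)) /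
    (2 * σ * DD σ ω c y ^ 2)

noncomputable def TT (σ ω c y : ℝ) : ℝ := c / 2 - FF σ ω c y / (2 * σ + 2)

noncomputable def TT' (σ ω c y : ℝ) : ℝ := -FF' σ ω c y / (2 * σ + 2)

noncomputable def uu (σ ω c y : ℝ) : ℂ :=
  (solProfile σ ω c y : ℂ) * Complex.exp (Complex.I * (travPhase σ ω c y : ℂ))

section basic

variable {σ ω c : ℝ} (hσ : 0 < σ) (h : c ^ 2 < 4 * ω)

include h in
lemma hω : 0 < ω := by nlinarith [sq_nonneg c]

include h in
lemma hW : 0 < Real.sqrt ω := Real.sqrt_pos.2 (hω h)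

include h in
lemma hcW : c < 2 * Real.sqrt ω := by
  have h1 := hW h
  nlinarith [Real.sq_sqrt (hω h).le]

include h in
lemma hDpos (y : ℝ) : 0 < DD σ ω c y := by
  have h1 := hW h
  have h2 : c / (2 * Real.sqrt ω) < 1 := (div_lt_one (by linarith)).2 (hcW h)
  have h3 := Real.one_le_cosh (bb σ ω c * y)
  unfold DD; linarith

include hσ h in
lemma hFpos (y : ℝ) : 0 < FF σ ω c y := by
  have h1 := hW h
  have h2 := hDpos (σ := σ) h y
  unfold FF
  have : 0 < (σ + 1) * (4 * ω - c ^ 2) := by nlinarith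
  positivity

lemma prof_eq (y : ℝ) : solProfile σ ω c y = FF σ ω c y ^ (1 / (2 * σ)) := rfl

include hσ h in
lemma prof_pos (y : ℝ) : 0 < solProfile σ ω c y :=
  Real.rpow_pos_of_pos (hFpos hσ h y) _

include hσ h in
lemma prof_pow (y : ℝ) : solProfile σ ω c y ^ (2 * σ) = FF σ ω c y := by
  rw [prof_eq, ← Real.rpow_mul (hFpos hσ h y).le, one_div,
    inv_mul_cancel₀ (by positivity), Real.rpow_one]

end basic

section derivs

variable {σ ω c : ℝ} (hσ : 0 < σ) (h : c ^ 2 < 4 * ω)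

lemma hasDerivAt_DD (y : ℝ) :
    HasDerivAt (fun y => DD σ ω c y) (bb σ ω c * Real.sinh (bb σ ω c * y)) y := by
  have h1 : HasDerivAt (fun y : ℝ => bb σ ω c * y) (bb σ ω c) y := by
    simpa using (hasDerivAt_id y).const_mul (bb σ ω c)
  have h2 := (Real.hasDerivAt_cosh (bb σ ω c * y)).comp y h1
  unfold DD
  simpa [Function.comp_def, mul_comm] using h2.sub_const (c / (2 * Real.sqrt ω))

include h in
lemma hasDerivAt_FF (y : ℝ) :
    HasDerivAt (fun y => FF σ ω c y) (FF' σ ω c y) y := by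
  have h1 := ((hasDerivAt_DD (σ := σ) (ω := ω) (c := c) y).const_mul (2 * Real.sqrt ω))
  have hne : 2 * Real.sqrt ω * DD σ ω c y ≠ 0 := by
    have := hW h; have := hDpos (σ := σ) h y; positivity
  have h2 := (hasDerivAt_const y ((σ + 1) * (4 * ω - c ^ 2))).div h1 hne
  unfold FF FF'
  refine h2.congr_deriv ?_
  field_simp
  ring

include hσ h in
lemma hasDerivAt_prof (y : ℝ) :
    HasDerivAt (fun y => solProfile σ ω c y) (GG σ ω c y * solProfile σ ω c y) y := by
  have hF := hFpos hσ h y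
  have h1 := (hasDerivAt_FF (σ := σ) h y).rpow_const (p := 1 / (2 * σ)) (Or.inl hF.ne')
  have he : (fun y => solProfile σ ω c y) = fun y => FF σ ω c y ^ (1 / (2 * σ)) := rfl
  rw [he]
  convert h1 using 1
  rw [Real.rpow_sub_one hF.ne']
  have hkey : FF' σ ω c y * (1 / (2 * σ)) = GG σ ω c y * FF σ ω c y := by
    have hWp := hW h; have hD := hDpos (σ := σ) h y
    unfold FF' GG FF
    field_simp
  rw [prof_eq]
  field_simp at hkey ⊢
  nlinarith [Real.rpow_pos_of_pos hF (1 / (2 * σ)), hkey]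

lemma contFF (hσ : 0 < σ) (h : c ^ 2 < 4 * ω) : Continuous (fun y => FF σ ω c y) := by
  have : ∀ y, HasDerivAt (fun y => FF σ ω c y) (FF' σ ω c y) y := hasDerivAt_FF (σ := σ) h
  exact continuous_iff_continuousAt.2 fun y => ((this y).differentiableAt).continuousAt

lemma exp_half_le_cosh (x : ℝ) : Real.exp |x| / 2 ≤ Real.cosh x := by
  have h1 := Real.exp_abs_le x
  rw [Real.cosh_eq]
  linarith

lemma integrable_exp_neg_abs {b : ℝ} (hb : 0 < b) :
    Integrable (fun y : ℝ => Real.exp (-(b * |y|))) := by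
  have hIci : IntegrableOn (fun y : ℝ => Real.exp (-(b * |y|))) (Set.Ici 0) := by
    rw [integrableOn_Ici_iff_integrableOn_Ioi]
    refine (exp_neg_integrableOn_Ioi 0 hb).congr_fun (fun y hy => ?_) measurableSet_Ioi
    rw [abs_of_pos hy]; ring_nf
  have hIic : IntegrableOn (fun y : ℝ => Real.exp (-(b * |y|))) (Set.Iic 0) := by
    rw [← integrable_indicator_iff measurableSet_Iic]
    have h1 := ((integrable_indicator_iff measurableSet_Ici).2 hIci).comp_neg
    refine h1.congr (Filter.Eventually.of_forall fun y => ?_)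
    by_cases hy : y ≤ 0
    · simp [Set.indicator, hy, neg_nonneg, abs_neg]
    · have hy' : ¬ (0 ≤ -y) := by simpa [neg_nonneg] using hy
      simp [Set.indicator, hy, hy']
  have := hIic.union hIci
  simpa [Set.Iic_union_Ici] using this

include hσ h in
lemma intFF : Integrable (fun y => FF σ ω c y) := by
  have hWp : 0 < Real.sqrt ω := hW h
  have hbpos : 0 < bb σ ω c := mul_pos hσ (Real.sqrt_pos.2 (by linarith))
  have hd : |c / (2 * Real.sqrt ω)| < 1 := by
    rw [abs_div, abs_of_pos (by linarith : (0:ℝ) < 2 * Real.sqrt ω),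
      div_lt_one (by linarith)]
    have h1 : c < 2 * Real.sqrt ω := hcW h
    have h2 : -c < 2 * Real.sqrt ω := by nlinarith [Real.sq_sqrt (hω h).le]
    cases abs_cases c with
    | inl hc => linarith [hc.1]
    | inr hc => linarith [hc.1]
  set d : ℝ := c / (2 * Real.sqrt ω) with hddef
  set K : ℝ := (σ + 1) * (4 * ω - c ^ 2) / (Real.sqrt ω * (1 - |d|)) with hKdef
  apply Integrable.mono' ((integrable_exp_neg_abs hbpos).const_mul K)
  · exact (contFF hσ h).aestronglyMeasurable
  · filter_upwards with y
    rw [Real.norm_of_nonneg (hFpos hσ h y).le]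
    have hcosh := exp_half_le_cosh (bb σ ω c * y)
    have habs : |bb σ ω c * y| = bb σ ω c * |y| := by
      rw [abs_mul, abs_of_pos hbpos]
    rw [habs] at hcosh
    have h1le := Real.one_le_cosh (bb σ ω c * y)
    have hDlb : (1 - |d|) * (Real.exp (bb σ ω c * |y|) / 2) ≤ DD σ ω c y := by
      unfold DD
      have hd1 : d ≤ |d| := le_abs_self d
      nlinarith [abs_nonneg d]
    have hA0 : 0 < (σ + 1) * (4 * ω - c ^ 2) := by nlinarith
    have hDp := hDpos (σ := σ) h y
    have hlb : 0 < (1 - |d|) * (Real.exp (bb σ ω c * |y|) / 2) := by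
      have := Real.exp_pos (bb σ ω c * |y|)
      nlinarith
    have step1 : FF σ ω c y ≤
        (σ + 1) * (4 * ω - c ^ 2) /
          (2 * Real.sqrt ω * ((1 - |d|) * (Real.exp (bb σ ω c * |y|) / 2))) := by
      unfold FF
      apply div_le_div_of_nonneg_left hA0.le
      · positivity
      · have : (0:ℝ) < 2 * Real.sqrt ω := by linarith
        nlinarith
    refine step1.trans (le_of_eq ?_)
    have h2 : 2 * Real.sqrt ω * ((1 - |d|) * (Real.exp (bb σ ω c * |y|) / 2))
        = Real.sqrt ω * (1 - |d|) * Real.exp (bb σ ω c * |y|) := by ring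
    rw [h2, Real.exp_neg, div_mul_eq_div_div, ← hKdef, div_eq_mul_inv]

include hσ h in
lemma theta_eq (z : ℝ) :
    travPhase σ ω c z = c / 2 * z -
      (1 / (2 * σ + 2)) *
        ((∫ η in Set.Iic (0:ℝ), FF σ ω c η) + ∫ η in (0:ℝ)..z, FF σ ω c η) := by
  unfold travPhase
  have hint := intFF hσ h
  congr 2
  have hfun : (fun η => solProfile σ ω c η ^ (2 * σ)) = fun η => FF σ ω c η :=
    funext (prof_pow hσ h)
  rw [hfun]
  rw [setIntegral_congr_set Iio_ae_eq_Iic]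
  have := intervalIntegral.integral_Iic_sub_Iic (hint.integrableOn (s := Set.Iic (0:ℝ)))
    (hint.integrableOn (s := Set.Iic z))
  linarith

include hσ h in
lemma hasDerivAt_theta (y : ℝ) :
    HasDerivAt (fun y => travPhase σ ω c y) (TT σ ω c y) y := by
  have hint := intFF hσ h
  have h1 : HasDerivAt (fun z => ∫ η in (0:ℝ)..z, FF σ ω c η) (FF σ ω c y) y :=
    intervalIntegral.integral_hasDerivAt_right (hint.intervalIntegrable)
      ((contFF hσ h).stronglyMeasurableAtFilter _ _) (contFF hσ h).continuousAt
  have h2 := ((h1.const_add (∫ η in Set.Iic (0:ℝ), FF σ ω c η)).const_mul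
      (1 / (2 * σ + 2)))
  have h3 := ((hasDerivAt_id y).const_mul (c / 2)).sub h2
  have he : (fun y => travPhase σ ω c y) = fun z => c / 2 * z -
      (1 / (2 * σ + 2)) *
        ((∫ η in Set.Iic (0:ℝ), FF σ ω c η) + ∫ η in (0:ℝ)..z, FF σ ω c η) :=
    funext (theta_eq hσ h)
  rw [he]
  refine h3.congr_deriv ?_
  unfold TT
  field_simp

include hσ h in
lemma hasDerivAt_GG (y : ℝ) :
    HasDerivAt (fun y => GG σ ω c y) (GG' σ ω c y) y := by
  have hlin : HasDerivAt (fun y : ℝ => bb σ ω c * y) (bb σ ω c) y := by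
    simpa using (hasDerivAt_id y).const_mul (bb σ ω c)
  have hnum : HasDerivAt (fun y => -(bb σ ω c * Real.sinh (bb σ ω c * y)))
      (-(bb σ ω c * (Real.cosh (bb σ ω c * y) * bb σ ω c))) y := by
    exact (((Real.hasDerivAt_sinh (bb σ ω c * y)).comp y hlin).const_mul (bb σ ω c)).neg
  have hden : HasDerivAt (fun y => 2 * σ * DD σ ω c y)
      (2 * σ * (bb σ ω c * Real.sinh (bb σ ω c * y))) y :=
    (hasDerivAt_DD y).const_mul (2 * σ)
  have hne : 2 * σ * DD σ ω c y ≠ 0 := by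
    have := hDpos (σ := σ) h y; positivity
  have := hnum.div hden hne
  unfold GG GG'
  refine this.congr_deriv ?_
  have hD := (hDpos (σ := σ) h y).ne'
  field_simp
  ring

include h in
lemma hasDerivAt_TT (y : ℝ) :
    HasDerivAt (fun y => TT σ ω c y) (TT' σ ω c y) y := by
  have := ((hasDerivAt_FF (σ := σ) h y).div_const (2 * σ + 2)).const_sub (c / 2)
  unfold TT TT'
  refine this.congr_deriv ?_
  ring

include hσ h in
lemma hasDerivAt_uu (y : ℝ) :
    HasDerivAt (fun y => uu σ ω c y)
      (((GG σ ω c y : ℂ) + Complex.I * (TT σ ω c y : ℂ)) * uu σ ω c y) y := by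
  have h1 := (hasDerivAt_prof hσ h y).ofReal_comp
  have h2 := ((hasDerivAt_theta hσ h y).ofReal_comp.const_mul Complex.I).cexp
  have h3 := h1.mul h2
  unfold uu
  refine h3.congr_deriv ?_
  push_cast
  ring

include hσ h in
lemma hasDerivAt_hu (y : ℝ) :
    HasDerivAt (fun y => ((GG σ ω c y : ℂ) + Complex.I * (TT σ ω c y : ℂ)) * uu σ ω c y)
      (((GG' σ ω c y : ℂ) + Complex.I * (TT' σ ω c y : ℂ)) * uu σ ω c y +
        ((GG σ ω c y : ℂ) + Complex.I * (TT σ ω c y : ℂ)) ^ 2 * uu σ ω c y) y := by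
  have hh1 : HasDerivAt (fun y => (GG σ ω c y : ℂ) + Complex.I * (TT σ ω c y : ℂ))
      ((GG' σ ω c y : ℂ) + Complex.I * (TT' σ ω c y : ℂ)) y :=
    ((hasDerivAt_GG hσ h y).ofReal_comp).add
      (((hasDerivAt_TT (σ := σ) h y).ofReal_comp).const_mul Complex.I)
  have := hh1.mul (hasDerivAt_uu hσ h y)
  refine this.congr_deriv ?_
  ring

end derivs

section algebra

lemma keyR (σ c W b S C : ℝ) (hσ : σ ≠ 0) (hW : W ≠ 0) (h2σ : 2 * σ + 2 ≠ 0) (hσ1 : σ + 1 ≠ 0)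
    (hD : C - c / (2 * W) ≠ 0) (hS : S ^ 2 = C ^ 2 - 1)
    (hb : b ^ 2 = σ ^ 2 * (4 * W ^ 2 - c ^ 2)) :
    -(b ^ 2 * (C * (C - c / (2 * W)) - S ^ 2)) / (2 * σ * (C - c / (2 * W)) ^ 2) +
        (-(b * S) / (2 * σ * (C - c / (2 * W)))) ^ 2 -
        (c / 2 - (σ + 1) * (4 * W ^ 2 - c ^ 2) / (2 * W * (C - c / (2 * W))) / (2 * σ + 2)) ^ 2 -
        ((σ + 1) * (4 * W ^ 2 - c ^ 2) / (2 * W * (C - c / (2 * W))) - c) *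
          (c / 2 - (σ + 1) * (4 * W ^ 2 - c ^ 2) / (2 * W * (C - c / (2 * W))) / (2 * σ + 2)) -
        W ^ 2 = 0 := by
  set E := C - c / (2 * W) with hEdef
  clear_value E
  have hc : c = 2 * W * C - 2 * W * E := by
    rw [hEdef]; field_simp; ring
  clear hEdef
  subst hc
  have h1 : (-(b * S) / (2 * σ * E)) ^ 2 = b ^ 2 * S ^ 2 / (2 * σ * E) ^ 2 := by
    rw [div_pow]; ring_nf
  rw [h1, hb, hS]
  field_simp
  ring

lemma keyI (σ c W b S C : ℝ) (hσ : σ ≠ 0) (hW : W ≠ 0) (h2σ : 2 * σ + 2 ≠ 0) (hσ1 : σ + 1 ≠ 0)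
    (hD : C - c / (2 * W) ≠ 0) :
    -(-((σ + 1) * (4 * W ^ 2 - c ^ 2) * (2 * W * (b * S))) /
          (2 * W * (C - c / (2 * W))) ^ 2) / (2 * σ + 2) +
        2 * (-(b * S) / (2 * σ * (C - c / (2 * W)))) *
          (c / 2 - (σ + 1) * (4 * W ^ 2 - c ^ 2) / (2 * W * (C - c / (2 * W))) / (2 * σ + 2)) +
        ((σ + 1) * (4 * W ^ 2 - c ^ 2) / (2 * W * (C - c / (2 * W))) - c) *
          (-(b * S) / (2 * σ * (C - c / (2 * W)))) = 0 := by
  set E := C - c / (2 * W) with hEdef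
  clear_value E
  have hc : c = 2 * W * C - 2 * W * E := by
    rw [hEdef]; field_simp; ring
  clear hEdef
  subst hc
  field_simp
  ring

end algebra

section point

variable {σ ω c : ℝ} (hσ : 0 < σ) (h : c ^ 2 < 4 * ω)

include hσ h in
lemma R0 (y : ℝ) :
    GG' σ ω c y + GG σ ω c y ^ 2 - TT σ ω c y ^ 2 -
      (FF σ ω c y - c) * TT σ ω c y - ω = 0 := by
  have hW2 : Real.sqrt ω ^ 2 = ω := Real.sq_sqrt (hω h).le
  have hWne := (hW h).ne'
  have hDne : Real.cosh (bb σ ω c * y) - c / (2 * Real.sqrt ω) ≠ 0 := (hDpos (σ := σ) h y).ne'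
  have hb : bb σ ω c ^ 2 = σ ^ 2 * (4 * Real.sqrt ω ^ 2 - c ^ 2) := by
    unfold bb; rw [mul_pow, Real.sq_sqrt (by linarith : (0:ℝ) ≤ 4 * ω - c ^ 2), hW2]
  have h2σ : 2 * σ + 2 ≠ 0 := by positivity
  have key := keyR σ c (Real.sqrt ω) (bb σ ω c) (Real.sinh (bb σ ω c * y))
    (Real.cosh (bb σ ω c * y)) hσ.ne' hWne h2σ (by positivity) hDne (Real.sinh_sq _) hb
  unfold GG' GG TT FF DD
  set W := Real.sqrt ω with hWdef
  set B := bb σ ω c with hBdef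
  rw [← hW2]
  linear_combination key

include hσ h in
lemma I0 (y : ℝ) :
    TT' σ ω c y + 2 * GG σ ω c y * TT σ ω c y + (FF σ ω c y - c) * GG σ ω c y = 0 := by
  have hW2 : Real.sqrt ω ^ 2 = ω := Real.sq_sqrt (hω h).le
  have hWne := (hW h).ne'
  have hDne : Real.cosh (bb σ ω c * y) - c / (2 * Real.sqrt ω) ≠ 0 := (hDpos (σ := σ) h y).ne'
  have h2σ : 2 * σ + 2 ≠ 0 := by positivity
  have key := keyI σ c (Real.sqrt ω) (bb σ ω c) (Real.sinh (bb σ ω c * y))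
    (Real.cosh (bb σ ω c * y)) hσ.ne' hWne h2σ (by positivity) hDne
  unfold TT' FF' GG TT FF DD
  set W := Real.sqrt ω with hWdef
  set B := bb σ ω c with hBdef
  rw [← hW2]
  linear_combination key

lemma keyC (g g' T T' F c ω : ℝ) (hR : g' + g ^ 2 - T ^ 2 - (F - c) * T - ω = 0)
    (hI : T' + 2 * g * T + (F - c) * g = 0) :
    ((g' : ℂ) + Complex.I * (T' : ℂ)) + ((g : ℂ) + Complex.I * (T : ℂ)) ^ 2 +
      Complex.I * ((F : ℂ) - (c : ℂ)) * ((g : ℂ) + Complex.I * (T : ℂ)) - (ω : ℂ) = 0 := by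
  have hR' : (g' : ℂ) + (g : ℂ) ^ 2 - (T : ℂ) ^ 2 - ((F : ℂ) - (c : ℂ)) * (T : ℂ) - (ω : ℂ) = 0 := by
    have := congrArg (fun x : ℝ => (x : ℂ)) hR
    push_cast at this
    convert this using 1
  have hI' : (T' : ℂ) + 2 * (g : ℂ) * (T : ℂ) + ((F : ℂ) - (c : ℂ)) * (g : ℂ) = 0 := by
    have := congrArg (fun x : ℝ => (x : ℂ)) hI
    push_cast at this
    convert this using 1
  linear_combination hR' + Complex.I * hI' +
    ((T : ℂ) ^ 2 + ((F : ℂ) - (c : ℂ)) * (T : ℂ)) * Complex.I_sq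

include hσ h in
lemma keyId (y : ℝ) :
    ((GG' σ ω c y : ℂ) + Complex.I * (TT' σ ω c y : ℂ)) +
      ((GG σ ω c y : ℂ) + Complex.I * (TT σ ω c y : ℂ)) ^ 2 +
      Complex.I * ((FF σ ω c y : ℂ) - (c : ℂ)) *
        ((GG σ ω c y : ℂ) + Complex.I * (TT σ ω c y : ℂ)) - (ω : ℂ) = 0 :=
  keyC _ _ _ _ _ _ _ (R0 hσ h y) (I0 hσ h y)

end point
end GDNLS

open GDNLS in
theorem solWave_solves_gDNLS (σ ω c : ℝ) (hσ : 0 < σ) (h : c ^ 2 < 4 * ω) :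
    ∀ x t : ℝ,
      Complex.I * deriv (fun τ => solWave σ ω c x τ) t
        + deriv (deriv (fun ξ => solWave σ ω c ξ t)) x
        + Complex.I * ((‖solWave σ ω c x t‖ ^ (2 * σ) : ℝ) : ℂ) *
            deriv (fun ξ => solWave σ ω c ξ t) x = 0 := by
  intro x t
  have hsol : ∀ ξ τ : ℝ, solWave σ ω c ξ τ =
      Complex.exp (Complex.I * ((ω * τ : ℝ) : ℂ)) * uu σ ω c (ξ - c * τ) := by
    intro ξ τ; unfold solWave uu; ring
  have e1 : (fun τ => solWave σ ω c x τ) =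
      fun τ : ℝ => Complex.exp (Complex.I * ((ω * τ : ℝ) : ℂ)) * uu σ ω c (x - c * τ) :=
    funext fun τ => hsol x τ
  have e2 : (fun ξ => solWave σ ω c ξ t) =
      fun ξ : ℝ => Complex.exp (Complex.I * ((ω * t : ℝ) : ℂ)) * uu σ ω c (ξ - c * t) :=
    funext fun ξ => hsol ξ t
  -- time derivative
  have hEd : HasDerivAt (fun τ : ℝ => Complex.exp (Complex.I * ((ω * τ : ℝ) : ℂ)))
      (Complex.I * (ω : ℂ) * Complex.exp (Complex.I * ((ω * t : ℝ) : ℂ))) t := by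
    have h0 : (fun τ : ℝ => Complex.exp (Complex.I * ((ω * τ : ℝ) : ℂ))) =
        fun τ : ℝ => Complex.exp ((Complex.I * (ω : ℂ)) * ((τ : ℝ) : ℂ)) := by
      funext τ; push_cast; ring_nf
    rw [h0]
    have h1 : HasDerivAt (fun τ : ℝ => ((τ : ℝ) : ℂ)) 1 t := by
      simpa using (hasDerivAt_id t).ofReal_comp
    have h2 := (h1.const_mul (Complex.I * (ω : ℂ))).cexp
    have harg : Complex.I * ((ω * t : ℝ) : ℂ) = Complex.I * (ω : ℂ) * ((t : ℝ) : ℂ) := by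
      push_cast; ring
    rw [harg]
    convert h2 using 1
    ring
  have hin_t : HasDerivAt (fun τ : ℝ => x - c * τ) (-c) t := by
    simpa using ((hasDerivAt_id t).const_mul c).const_sub x
  have hud := HasDerivAt.scomp (x := t) (hasDerivAt_uu hσ h (x - c * t)) hin_t
  simp only [Function.comp_def, smul_eq_mul, Complex.real_smul] at hud
  have ht : HasDerivAt (fun τ => solWave σ ω c x τ)
      (Complex.I * (ω : ℂ) * Complex.exp (Complex.I * ((ω * t : ℝ) : ℂ)) *
          uu σ ω c (x - c * t) +
        Complex.exp (Complex.I * ((ω * t : ℝ) : ℂ)) *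
          (((GG σ ω c (x - c * t) : ℂ) + Complex.I * (TT σ ω c (x - c * t) : ℂ)) *
            uu σ ω c (x - c * t)) * (-(c : ℂ))) t := by
    rw [e1]
    have h3 := hEd.mul hud
    refine h3.congr_deriv ?_
    push_cast
    ring
  -- first space derivative
  have hin_x : ∀ ξ : ℝ, HasDerivAt (fun ξ : ℝ => ξ - c * t) 1 ξ := fun ξ =>
    (hasDerivAt_id ξ).sub_const (c * t)
  have hx : ∀ ξ : ℝ, HasDerivAt (fun ξ => solWave σ ω c ξ t)
      (Complex.exp (Complex.I * ((ω * t : ℝ) : ℂ)) *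
        (((GG σ ω c (ξ - c * t) : ℂ) + Complex.I * (TT σ ω c (ξ - c * t) : ℂ)) *
          uu σ ω c (ξ - c * t))) ξ := by
    intro ξ
    rw [e2]
    have h1 := (HasDerivAt.scomp (x := ξ) (hasDerivAt_uu hσ h (ξ - c * t)) (hin_x ξ)).const_mul
      (Complex.exp (Complex.I * ((ω * t : ℝ) : ℂ)))
    simp only [Function.comp_def, smul_eq_mul, Complex.real_smul] at h1
    refine h1.congr_deriv ?_
    push_cast
    ring
  have hder1 : deriv (fun ξ => solWave σ ω c ξ t) =
      fun ξ => Complex.exp (Complex.I * ((ω * t : ℝ) : ℂ)) *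
        (((GG σ ω c (ξ - c * t) : ℂ) + Complex.I * (TT σ ω c (ξ - c * t) : ℂ)) *
          uu σ ω c (ξ - c * t)) :=
    funext fun ξ => (hx ξ).deriv
  -- second space derivative
  have hx2 : HasDerivAt (fun ξ : ℝ => Complex.exp (Complex.I * ((ω * t : ℝ) : ℂ)) *
        (((GG σ ω c (ξ - c * t) : ℂ) + Complex.I * (TT σ ω c (ξ - c * t) : ℂ)) *
          uu σ ω c (ξ - c * t)))
      (Complex.exp (Complex.I * ((ω * t : ℝ) : ℂ)) *
        (((GG' σ ω c (x - c * t) : ℂ) + Complex.I * (TT' σ ω c (x - c * t) : ℂ)) *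
            uu σ ω c (x - c * t) +
          ((GG σ ω c (x - c * t) : ℂ) + Complex.I * (TT σ ω c (x - c * t) : ℂ)) ^ 2 *
            uu σ ω c (x - c * t))) x := by
    have h1 := (HasDerivAt.scomp (x := x) (hasDerivAt_hu hσ h (x - c * t)) (hin_x x)).const_mul
      (Complex.exp (Complex.I * ((ω * t : ℝ) : ℂ)))
    simp only [Function.comp_def, smul_eq_mul, Complex.real_smul] at h1
    refine h1.congr_deriv ?_
    push_cast
    ring
  -- modulus
  have habs : ((‖solWave σ ω c x t‖ ^ (2 * σ) : ℝ) : ℂ) =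
      ((FF σ ω c (x - c * t) : ℝ) : ℂ) := by
    have h1 : ‖solWave σ ω c x t‖ = solProfile σ ω c (x - c * t) := by
      unfold solWave
      rw [norm_mul, norm_mul, Complex.norm_exp, Complex.norm_exp]
      simp [Complex.norm_real, abs_of_pos (prof_pos hσ h (x - c * t))]
    rw [h1, prof_pow hσ h]
  rw [ht.deriv, habs]
  rw [hder1]
  rw [hx2.deriv]
  simp only []
  have key := keyId hσ h (x - c * t)
  linear_combination (Complex.exp (Complex.I * ((ω * t : ℝ) : ℂ)) * uu σ ω c (x - c * t)) * key +
    ((ω : ℂ) * Complex.exp (Complex.I * ((ω * t : ℝ) : ℂ)) * uu σ ω c (x - c * t)) * Complex.I_sq
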